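/- Discrete energy decay identity for the Galerkin (finite element) scheme (Theorem 5.2(ii)): assume time-independent data ℓ ∈ X' and g_h ∈ X with e(g_h) ∈ Ψ_h, let (u_h^k, φ_h^k) ∈ (g_h + V_h) × Ψ_h, k = 0, …, N, be the solution of the discrete scheme, and set E_h^k := E(u_h^k, φ_h^k), D̄_τ ρ^k := (ρ^k − ρ^{k−1})/τ. Then for every k = 1, …, N: D̄_τ E_h^k + (ατ/2)‖D̄_τ φ_h^k‖_Ψ² + (τ/2)⟪C(D̄_τ(e u_h^k − φ_h^k)), D̄_τ(e u_h^k − φ_h^k)⟫_Ψ = −η‖D̄_τ φ_h^k‖_Ψ² ≤ 0. -/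
import Mathlib


open scoped RealInnerProductSpace

/-- Discrete energy decay identity for the Galerkin (finite element) scheme
(Theorem 5.2(ii)): for the solution of the discrete scheme with time-independent
data, `D̄_τ E_hᵏ + (ατ/2)‖D̄_τ φ_hᵏ‖² + (τ/2)⟪C D̄_τ(e u_hᵏ − φ_hᵏ), D̄_τ(e u_hᵏ − φ_hᵏ)⟫
= −η‖D̄_τ φ_hᵏ‖² ≤ 0`. -/
theorem stmt_14
    {X Ψ : Type*}
    [NormedAddCommGroup X] [InnerProductSpace ℝ X] [CompleteSpace X]
    [NormedAddCommGroup Ψ] [InnerProductSpace ℝ Ψ] [CompleteSpace Ψ]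
    (V : Submodule ℝ X) (hV : IsClosed (V : Set X))
    (e : X →L[ℝ] Ψ) (C : Ψ →L[ℝ] Ψ)
    (hCsym : ∀ φ ψ : Ψ, ⟪C φ, ψ⟫ = ⟪φ, C ψ⟫)
    (cstar : ℝ) (hcstar : 0 < cstar)
    (hCcoer : ∀ ψ : Ψ, cstar * ‖ψ‖ ^ 2 ≤ ⟪C ψ, ψ⟫)
    (c₀ : ℝ) (hc₀ : 0 < c₀)
    (hacoer : ∀ v ∈ V, c₀ * ‖v‖ ^ 2 ≤ ⟪C (e v), e v⟫)
    (η α : ℝ) (hη : 0 < η) (hα : 0 ≤ α)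
    (Vh : Submodule ℝ X) (hVhV : Vh ≤ V) (hVh : IsClosed (Vh : Set X))
    (Ψh : Submodule ℝ Ψ) (hΨh : IsClosed (Ψh : Set Ψ))
    (he_h : ∀ v ∈ Vh, e v ∈ Ψh)
    (hC_h : ∀ ψ ∈ Ψh, C ψ ∈ Ψh)
    (τ : ℝ) (hτ : 0 < τ) (N : ℕ)
    (ℓ : X →L[ℝ] ℝ) (gh : X) (hgh : e gh ∈ Ψh)
    (E : X → Ψ → ℝ)
    (hE : ∀ u φ, E u φ =
      (1 / 2) * ⟪C (e u - φ), e u - φ⟫ + (α / 2) * ‖φ‖ ^ 2 - ℓ u)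
    (u : ℕ → X) (φ : ℕ → Ψ)
    (hmem : ∀ k ≤ N, u k - gh ∈ Vh)
    (hφmem : ∀ k ≤ N, φ k ∈ Ψh)
    (heq1 : ∀ k ≤ N, ∀ v ∈ Vh, ⟪C (e (u k) - φ k), e v⟫ = ℓ v)
    (heq2 : ∀ k, 1 ≤ k → k ≤ N →
      (η / τ) • (φ k - φ (k - 1)) + α • φ k - C (e (u k) - φ k) = 0) :
    ∀ k, 1 ≤ k → k ≤ N →
      (E (u k) (φ k) - E (u (k - 1)) (φ (k - 1))) / τ
        + (α * τ / 2) * ‖τ⁻¹ • (φ k - φ (k - 1))‖ ^ 2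
        + (τ / 2) * ⟪C (τ⁻¹ • ((e (u k) - φ k) - (e (u (k - 1)) - φ (k - 1)))),
            τ⁻¹ • ((e (u k) - φ k) - (e (u (k - 1)) - φ (k - 1)))⟫
        = -(η * ‖τ⁻¹ • (φ k - φ (k - 1))‖ ^ 2) ∧
      -(η * ‖τ⁻¹ • (φ k - φ (k - 1))‖ ^ 2) ≤ 0 := by
  intro k hk1 hkN
  refine ⟨?_, neg_nonpos.mpr (by positivity)⟩
  have hk' : k - 1 ≤ N := by omega
  have hδuVh : u k - u (k - 1) ∈ Vh := by
    have h := Vh.sub_mem (hmem k hkN) (hmem (k - 1) hk')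
    simpa [sub_sub_sub_cancel_right] using h
  have hℓ : ⟪C (e (u k) - φ k), e (u k - u (k - 1))⟫ = ℓ (u k - u (k - 1)) :=
    heq1 k hkN _ hδuVh
  have hC : C (e (u k) - φ k) = (η / τ) • (φ k - φ (k - 1)) + α • φ k :=
    (sub_eq_zero.mp (heq2 k hk1 hkN)).symm
  have hE1 := hE (u k) (φ k)
  have hE2 := hE (u (k - 1)) (φ (k - 1))
  have hℓsub : ℓ (u k) - ℓ (u (k - 1)) = ℓ (u k - u (k - 1)) := (map_sub ℓ _ _).symm
  set wk := e (u k) - φ k with hwk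
  set wp := e (u (k - 1)) - φ (k - 1) with hwp
  set δφ := φ k - φ (k - 1) with hδφ
  set δw := wk - wp with hδw
  have hsymm : ⟪C wp, wk⟫ = ⟪C wk, wp⟫ := by
    rw [hCsym wp wk, real_inner_comm]
  have hq1 : ⟪C δw, δw⟫ = ⟪C wk, wk⟫ - 2 * ⟪C wk, wp⟫ + ⟪C wp, wp⟫ := by
    simp only [hδw, map_sub, inner_sub_left, inner_sub_right]
    linarith [hsymm]
  have hδw2 : δw = e (u k - u (k - 1)) - δφ := by
    simp only [hδw, hwk, hwp, hδφ, map_sub]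
    abel
  have hA : ⟪C wk, δw⟫ = ℓ (u k - u (k - 1)) - ⟪C wk, δφ⟫ := by
    rw [hδw2, inner_sub_right, hℓ]
  have hq2 : ⟪C wk, δw⟫ = ⟪C wk, wk⟫ - ⟪C wk, wp⟫ := by
    simp only [hδw, inner_sub_right]
  have hB : ⟪C wk, δφ⟫ = (η / τ) * ‖δφ‖ ^ 2 + α * ⟪φ k, δφ⟫ := by
    rw [hC, inner_add_left, real_inner_smul_left, real_inner_smul_left,
      real_inner_self_eq_norm_sq]
  have hn : ‖φ k‖ ^ 2 - ‖φ (k - 1)‖ ^ 2 = 2 * ⟪φ k, δφ⟫ - ‖δφ‖ ^ 2 := by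
    have h1 : ‖δφ‖ ^ 2 = ‖φ k‖ ^ 2 - 2 * ⟪φ k, φ (k - 1)⟫ + ‖φ (k - 1)‖ ^ 2 := by
      rw [hδφ]; exact norm_sub_sq_real _ _
    have h2 : ⟪φ k, δφ⟫ = ‖φ k‖ ^ 2 - ⟪φ k, φ (k - 1)⟫ := by
      rw [hδφ, inner_sub_right, real_inner_self_eq_norm_sq]
    linarith
  have hEd : E (u k) (φ k) - E (u (k - 1)) (φ (k - 1)) =
      -(η / τ) * ‖δφ‖ ^ 2 - (1 / 2) * ⟪C δw, δw⟫ - (α / 2) * ‖δφ‖ ^ 2 := by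
    rw [hE1, hE2]
    linear_combination (1 / 2) * hq1 - hq2 + hA - hB + (α / 2) * hn - hℓsub
  have hns : ‖τ⁻¹ • δφ‖ ^ 2 = τ⁻¹ ^ 2 * ‖δφ‖ ^ 2 := by
    rw [norm_smul, mul_pow, norm_inv, Real.norm_eq_abs, abs_of_pos hτ]
  have his : ⟪C (τ⁻¹ • δw), τ⁻¹ • δw⟫ = τ⁻¹ ^ 2 * ⟪C δw, δw⟫ := by
    rw [map_smul, real_inner_smul_left, real_inner_smul_right]; ring
  rw [hEd, hns, his]
  field_simp
  ring
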